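/- Let A be a randomized algorithm from L2^{n×d} to L2^{n×d} satisfying (B, ε, δ)-targeted differential privacy with B, ε > 0, and let T : L2^{n×d} → {0,1} be a minimally responsive deterministic function. If A is γ-accurate for T with γ ∈ [1/2, 1), then ⌈2/B⌉ ≥ ⌈ε^{-1} ln Q⌉, where Q = (δ + γ(e^ε − 1))/(δ + (1 − γ)(e^ε − 1)). -/

import Mathlib

open MeasureTheory Real

noncomputable section

/-- Datasets: real n×d matrices as functions. -/
abbrev Mat (n d : ℕ) := Fin n → Fin d → ℝ

/-- Euclidean (L2) distance between two rows. -/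
def rowDist {d : ℕ} (u v : Fin d → ℝ) : ℝ := Real.sqrt (∑ j, (u j - v j) ^ 2)

/-- The set of n×d matrices each of whose rows has L2 norm at most 1. -/
def L2Ball (n d : ℕ) : Set (Mat n d) :=
  {X | ∀ i, Real.sqrt (∑ j, (X i j) ^ 2) ≤ 1}

/-- Classic neighbors: agree on exactly n−1 rows. -/
def ClassicNeighbors {n d : ℕ} (X X' : Mat n d) : Prop :=
  ∃ i, X i ≠ X' i ∧ ∀ j, j ≠ i → X j = X' j

/-- B-neighbors: classic neighbors whose differing rows are within L2 distance B. -/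
def BNeighbors {n d : ℕ} (B : ℝ) (X X' : Mat n d) : Prop :=
  ∃ i, X i ≠ X' i ∧ (∀ j, j ≠ i → X j = X' j) ∧ rowDist (X i) (X' i) ≤ B

/-- (B, ε, δ)-targeted differential privacy. -/
def TDP {n d : ℕ} {Ω : Type*} [MeasurableSpace Ω]
    (A : Mat n d → Measure Ω) (B ε δ : ℝ) : Prop :=
  ∀ X ∈ L2Ball n d, ∀ X' ∈ L2Ball n d, BNeighbors B X X' →
    ∀ E : Set Ω, MeasurableSet E →
      A X E ≤ ENNReal.ofReal (Real.exp ε) * A X' E + ENNReal.ofReal δ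

/-- (ε, δ)-classic differential privacy. -/
def ClassicDP {n d : ℕ} {Ω : Type*} [MeasurableSpace Ω]
    (A : Mat n d → Measure Ω) (ε δ : ℝ) : Prop :=
  ∀ X ∈ L2Ball n d, ∀ X' ∈ L2Ball n d, ClassicNeighbors X X' →
    ∀ E : Set Ω, MeasurableSet E →
      A X E ≤ ENNReal.ofReal (Real.exp ε) * A X' E + ENNReal.ofReal δ

/-- Cumulative row-wise L2 distance between two datasets. -/
def cumDist {n d : ℕ} (X X' : Mat n d) : ℝ := ∑ i, rowDist (X i) (X' i)

/-- Squared Frobenius norm. -/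
def frobSq {a b : ℕ} (M : Fin a → Fin b → ℝ) : ℝ := ∑ i, ∑ j, (M i j) ^ 2

lemma sqrtSum_eq_norm {d : ℕ} (u : Fin d → ℝ) :
    Real.sqrt (∑ j, u j ^ 2) = ‖(WithLp.equiv 2 (Fin d → ℝ)).symm u‖ := by
  rw [EuclideanSpace.norm_eq]
  simp [Real.norm_eq_abs, sq_abs]

lemma rowDist_eq_norm {d : ℕ} (u v : Fin d → ℝ) :
    rowDist u v = ‖(WithLp.equiv 2 (Fin d → ℝ)).symm u - (WithLp.equiv 2 (Fin d → ℝ)).symm v‖ := by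
  have : rowDist u v = Real.sqrt (∑ j, (fun j => u j - v j) j ^ 2) := rfl
  rw [this, sqrtSum_eq_norm]
  rfl

lemma sqrt_sum_smul {d : ℕ} (a : ℝ) (w : Fin d → ℝ) :
    Real.sqrt (∑ j, (a * w j) ^ 2) = |a| * Real.sqrt (∑ j, w j ^ 2) := by
  rw [← Real.sqrt_sq_eq_abs, ← Real.sqrt_mul (sq_nonneg a), Finset.mul_sum]
  congr 1
  exact Finset.sum_congr rfl fun j _ => by ring

lemma row_conv {d : ℕ} (u v : Fin d → ℝ) (t : ℝ) (h0 : 0 ≤ t) (h1 : t ≤ 1)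
    (hu : Real.sqrt (∑ j, u j ^ 2) ≤ 1) (hv : Real.sqrt (∑ j, v j ^ 2) ≤ 1) :
    Real.sqrt (∑ j, (u j + t * (v j - u j)) ^ 2) ≤ 1 := by
  have key : Real.sqrt (∑ j, (fun j => u j + t * (v j - u j)) j ^ 2)
      = ‖(WithLp.equiv 2 (Fin d → ℝ)).symm (fun j => u j + t * (v j - u j))‖ :=
    sqrtSum_eq_norm _
  rw [show (∑ j, (u j + t * (v j - u j)) ^ 2) = (∑ j, (fun j => u j + t * (v j - u j)) j ^ 2) from rfl, key]
  have hw : (WithLp.equiv 2 (Fin d → ℝ)).symm (fun j => u j + t * (v j - u j)) =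
      (1 - t) • (WithLp.equiv 2 (Fin d → ℝ)).symm u + t • (WithLp.equiv 2 (Fin d → ℝ)).symm v := by
    ext j
    simp [WithLp.equiv_symm_apply, PiLp.toLp_apply]
    ring
  rw [hw]
  rw [sqrtSum_eq_norm] at hu hv
  calc ‖(1 - t) • (WithLp.equiv 2 (Fin d → ℝ)).symm u + t • (WithLp.equiv 2 (Fin d → ℝ)).symm v‖
      ≤ ‖(1 - t) • (WithLp.equiv 2 (Fin d → ℝ)).symm u‖ + ‖t • (WithLp.equiv 2 (Fin d → ℝ)).symm v‖ := norm_add_le _ _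
    _ = (1 - t) * ‖(WithLp.equiv 2 (Fin d → ℝ)).symm u‖ + t * ‖(WithLp.equiv 2 (Fin d → ℝ)).symm v‖ := by
        rw [norm_smul, norm_smul, Real.norm_eq_abs, Real.norm_eq_abs, abs_of_nonneg (by linarith), abs_of_nonneg h0]
    _ ≤ (1 - t) * 1 + t * 1 := by
        apply add_le_add <;> apply mul_le_mul_of_nonneg_left <;> first | assumption | linarith
    _ = 1 := by ring

lemma rowDist_le_two {d : ℕ} (u v : Fin d → ℝ)
    (hu : Real.sqrt (∑ j, u j ^ 2) ≤ 1) (hv : Real.sqrt (∑ j, v j ^ 2) ≤ 1) :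
    rowDist u v ≤ 2 := by
  rw [rowDist_eq_norm]
  rw [sqrtSum_eq_norm] at hu hv
  calc ‖_ - _‖ ≤ ‖(WithLp.equiv 2 (Fin d → ℝ)).symm u‖ + ‖(WithLp.equiv 2 (Fin d → ℝ)).symm v‖ :=
        norm_sub_le _ _
    _ ≤ 2 := by linarith

/-- necessary condition for γ-accurate targeting under
(B, ε, δ)-targeted differential privacy: ⌈2/B⌉ ≥ ⌈ε⁻¹ ln Q⌉. -/
theorem targeting_accuracy_necessary {n d : ℕ}
    (A : Mat n d → Measure (Mat n d))
    [∀ X, IsProbabilityMeasure (A X)]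
    (B ε δ γ : ℝ) (hB : 0 < B) (hε : 0 < ε) (hδ : 0 ≤ δ)
    (hA : TDP A B ε δ)
    (T : Mat n d → Bool) (hT : Measurable T)
    -- minimal responsiveness
    (hmr : ∃ X ∈ L2Ball n d, ∃ X' ∈ L2Ball n d, ClassicNeighbors X X' ∧ T X ≠ T X')
    (hγ : γ ∈ Set.Ico (1 / 2 : ℝ) 1)
    -- γ-accuracy of A for T
    (hacc : ∀ X ∈ L2Ball n d, ENNReal.ofReal γ ≤ A X {Z | T Z = T X}) :
    ⌈(2 : ℝ) / B⌉ ≥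
      ⌈ε⁻¹ * Real.log ((δ + γ * (Real.exp ε - 1)) / (δ + (1 - γ) * (Real.exp ε - 1)))⌉ := by
  obtain ⟨hγ1, hγ2⟩ := hγ
  obtain ⟨X, hX, X', hX', ⟨i₀, hi0ne, hi0eq⟩, hTne⟩ := hmr
  -- the number of steps
  set s : ℕ := (⌈(2 : ℝ) / B⌉).toNat with hs_def
  have h2B : (0 : ℝ) < 2 / B := by positivity
  have hceil_pos : (0 : ℤ) < ⌈(2 : ℝ) / B⌉ := Int.ceil_pos.mpr h2B
  have hsz : ((s : ℤ)) = ⌈(2 : ℝ) / B⌉ := Int.toNat_of_nonneg hceil_pos.le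
  have hs_pos : 0 < s := by
    have := hceil_pos
    omega
  have hsR : (0 : ℝ) < (s : ℝ) := by exact_mod_cast hs_pos
  have hsle : 2 / B ≤ (s : ℝ) := by
    have h1 : (2 : ℝ) / B ≤ (⌈(2 : ℝ) / B⌉ : ℝ) := Int.le_ceil _
    have h2 : ((⌈(2 : ℝ) / B⌉ : ℤ) : ℝ) = (s : ℝ) := by exact_mod_cast hsz.symm
    linarith [h2 ▸ h1]
  have h2sB : 2 / (s : ℝ) ≤ B := by
    rw [div_le_iff₀ hsR]
    have := (div_le_iff₀ hB).mp hsle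
    linarith
  -- the event
  set E : Set (Mat n d) := {Z | T Z = T X} with hE_def
  have hE : MeasurableSet E := hT (measurableSet_singleton (T X))
  -- the interpolation path
  set Y : ℕ → Mat n d := fun k r c => X r c + ((k : ℝ) / s) * (X' r c - X r c) with hY_def
  have hY0 : Y 0 = X := by
    funext r c
    simp [hY_def]
  have hYs : Y s = X' := by
    funext r c
    simp only [hY_def]
    rw [div_self hsR.ne']
    ring
  have hYball : ∀ k, k ≤ s → Y k ∈ L2Ball n d := by
    intro k hk r
    exact row_conv (X r) (X' r) ((k : ℝ) / s) (by positivity)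
      (by rw [div_le_one hsR]; exact_mod_cast hk) (hX r) (hX' r)
  -- the differing coordinate
  obtain ⟨c₀, hc₀⟩ : ∃ c, X i₀ c ≠ X' i₀ c := by
    by_contra h
    push_neg at h
    exact hi0ne (funext h)
  -- consecutive B-neighbors
  have hBN : ∀ k, BNeighbors B (Y k) (Y (k + 1)) := by
    intro k
    refine ⟨i₀, ?_, ?_, ?_⟩
    · intro h
      have := congrFun h c₀
      simp only [hY_def] at this
      have hne : ((k : ℝ) / s) * (X' i₀ c₀ - X i₀ c₀) = (((k : ℕ) + 1 : ℕ) : ℝ) / s * (X' i₀ c₀ - X i₀ c₀) := by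
        linarith
      have hsub : X' i₀ c₀ - X i₀ c₀ ≠ 0 := sub_ne_zero.mpr (Ne.symm hc₀)
      have h2 := mul_right_cancel₀ hsub hne
      rw [div_eq_div_iff hsR.ne' hsR.ne'] at h2
      have h3 := mul_right_cancel₀ hsR.ne' h2
      push_cast at h3
      linarith
    · intro r hr
      have : X r = X' r := hi0eq r hr
      funext c
      simp [hY_def, congrFun this c]
    · have hd : ∀ c, Y k i₀ c - Y (k + 1) i₀ c = (1 / s) * (X i₀ c - X' i₀ c) := by
        intro c
        simp only [hY_def]
        push_cast
        field_simp
        ring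
      have : rowDist (Y k i₀) (Y (k + 1) i₀) = |1 / (s : ℝ)| * rowDist (X i₀) (X' i₀) := by
        rw [rowDist, rowDist, ← sqrt_sum_smul]
        congr 1
        exact Finset.sum_congr rfl fun c _ => by rw [hd c]
      rw [this, abs_of_pos (by positivity)]
      have h2 : rowDist (X i₀) (X' i₀) ≤ 2 := rowDist_le_two _ _ (hX i₀) (hX' i₀)
      calc 1 / (s : ℝ) * rowDist (X i₀) (X' i₀) ≤ 1 / (s : ℝ) * 2 := by
            apply mul_le_mul_of_nonneg_left h2 (by positivity)
        _ = 2 / s := by ring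
        _ ≤ B := h2sB
  -- one-step real inequality
  have hstep : ∀ k, k < s →
      (A (Y k) E).toReal ≤ Real.exp ε * (A (Y (k + 1)) E).toReal + δ := by
    intro k hk
    have h := hA (Y k) (hYball k hk.le) (Y (k + 1)) (hYball (k + 1) hk) (hBN k) E hE
    have hrhs_ne : ENNReal.ofReal (Real.exp ε) * A (Y (k + 1)) E + ENNReal.ofReal δ ≠ ⊤ :=
      ENNReal.add_ne_top.mpr ⟨ENNReal.mul_ne_top ENNReal.ofReal_ne_top (measure_ne_top _ _),
        ENNReal.ofReal_ne_top⟩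
    have := ENNReal.toReal_mono hrhs_ne h
    rwa [ENNReal.toReal_add (ENNReal.mul_ne_top ENNReal.ofReal_ne_top (measure_ne_top _ _))
      ENNReal.ofReal_ne_top, ENNReal.toReal_mul, ENNReal.toReal_ofReal (Real.exp_pos ε).le,
      ENNReal.toReal_ofReal hδ] at this
  -- the chain
  have key : ∀ k, k ≤ s → (A X E).toReal ≤
      Real.exp (k * ε) * (A (Y k) E).toReal + δ * ∑ j ∈ Finset.range k, Real.exp ε ^ j := by
    intro k
    induction k with
    | zero => intro _; simp [hY0]
    | succ k ih =>
      intro hk1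
      have hk : k ≤ s := Nat.le_of_succ_le hk1
      have h1 := ih hk
      have h2 := hstep k (Nat.lt_of_succ_le hk1)
      have hexp : Real.exp (((k : ℝ) + 1) * ε) = Real.exp ((k : ℝ) * ε) * Real.exp ε := by
        rw [← Real.exp_add]; ring_nf
      have hek : Real.exp ((k : ℝ) * ε) = Real.exp ε ^ k := by
        rw [← Real.exp_nat_mul]
      calc (A X E).toReal ≤ Real.exp ((k : ℝ) * ε) * (A (Y k) E).toReal
            + δ * ∑ j ∈ Finset.range k, Real.exp ε ^ j := h1
        _ ≤ Real.exp ((k : ℝ) * ε) * (Real.exp ε * (A (Y (k + 1)) E).toReal + δ)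
            + δ * ∑ j ∈ Finset.range k, Real.exp ε ^ j := by
            refine add_le_add ?_ le_rfl
            exact mul_le_mul_of_nonneg_left h2 (Real.exp_pos _).le
        _ = Real.exp (((k : ℕ) + 1 : ℕ) * ε) * (A (Y (k + 1)) E).toReal
            + δ * ∑ j ∈ Finset.range (k + 1), Real.exp ε ^ j := by
            rw [Finset.sum_range_succ]
            push_cast
            rw [hexp, hek]
            ring
  -- accuracy at endpoints
  have hγ0 : (0 : ℝ) ≤ γ := by linarith
  have hAX : γ ≤ (A X E).toReal := by
    have h := hacc X hX
    have := ENNReal.toReal_mono (measure_ne_top _ _) h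
    rwa [ENNReal.toReal_ofReal hγ0] at this
  have hcompl : Eᶜ = {Z | T Z = T X'} := by
    ext Z
    simp only [Set.mem_compl_iff, hE_def, Set.mem_setOf_eq]
    revert hTne
    cases T Z <;> cases hx : T X <;> cases hx' : T X' <;> simp
  have hAX' : (A X' E).toReal ≤ 1 - γ := by
    have h1 : ENNReal.ofReal γ ≤ A X' Eᶜ := by rw [hcompl]; exact hacc X' hX'
    have h1' : γ ≤ (A X' Eᶜ).toReal := by
      have := ENNReal.toReal_mono (measure_ne_top _ _) h1
      rwa [ENNReal.toReal_ofReal hγ0] at this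
    have hsum : A X' E + A X' Eᶜ = 1 := by
      rw [measure_add_measure_compl hE, measure_univ]
    have hsum' : (A X' E).toReal + (A X' Eᶜ).toReal = 1 := by
      rw [← ENNReal.toReal_add (measure_ne_top _ _) (measure_ne_top _ _), hsum]
      simp
    linarith
  -- main inequality
  have h1e : 1 < Real.exp ε := by nlinarith [Real.add_one_le_exp ε]
  have hc : (0 : ℝ) < Real.exp ε - 1 := by linarith
  have hgeo : ∑ j ∈ Finset.range s, Real.exp ε ^ j
      = (Real.exp ε ^ s - 1) / (Real.exp ε - 1) := geom_sum_eq h1e.ne' s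
  have hfin := key s le_rfl
  rw [hYs, hgeo] at hfin
  set R : ℝ := Real.exp ((s : ℝ) * ε) with hR_def
  have hRpow : Real.exp ε ^ s = R := by rw [hR_def, Real.exp_nat_mul]
  rw [hRpow] at hfin
  have hmain : γ ≤ R * (1 - γ) + δ * ((R - 1) / (Real.exp ε - 1)) := by
    have : R * (A X' E).toReal ≤ R * (1 - γ) :=
      mul_le_mul_of_nonneg_left hAX' (Real.exp_pos _).le
    linarith
  set c : ℝ := Real.exp ε - 1 with hc_def
  have hR1 : 1 ≤ R := Real.one_le_exp (by positivity)
  have hmul : γ * c ≤ R * (1 - γ) * c + δ * (R - 1) := by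
    have h := mul_le_mul_of_nonneg_right hmain hc.le
    have hdc : δ * ((R - 1) / c) * c = δ * (R - 1) := by
      field_simp
    rw [add_mul, hdc] at h
    exact h
  have hD : (0 : ℝ) < δ + (1 - γ) * c := by
    have : (0 : ℝ) < (1 - γ) * c := mul_pos (by linarith) hc
    linarith
  have hN : (0 : ℝ) < δ + γ * c := by
    have : (0 : ℝ) < γ * c := mul_pos (by linarith) hc
    linarith
  have hQle : (δ + γ * c) / (δ + (1 - γ) * c) ≤ R := by
    rw [div_le_iff₀ hD]
    have hexpand : R * (δ + (1 - γ) * c) = R * (1 - γ) * c + δ * (R - 1) + δ := by ring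
    rw [hexpand]
    linarith [hmul]
  have hQpos : (0 : ℝ) < (δ + γ * c) / (δ + (1 - γ) * c) := div_pos hN hD
  have hlog : Real.log ((δ + γ * c) / (δ + (1 - γ) * c)) ≤ (s : ℝ) * ε := by
    calc Real.log ((δ + γ * c) / (δ + (1 - γ) * c)) ≤ Real.log R :=
          Real.log_le_log hQpos hQle
      _ = (s : ℝ) * ε := Real.log_exp _
  have hfrac : ε⁻¹ * Real.log ((δ + γ * c) / (δ + (1 - γ) * c)) ≤ (s : ℝ) := by
    rw [inv_mul_le_iff₀ hε]
    linarith [hlog]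
  have hceil : ⌈ε⁻¹ * Real.log ((δ + γ * c) / (δ + (1 - γ) * c))⌉ ≤ (s : ℤ) := by
    rw [Int.ceil_le]
    exact_mod_cast hfrac
  rw [ge_iff_le, ← hsz]
  exact_mod_cast hceil
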